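/- arXiv:2507.04898 — 4 statements merged into one kernel-verified Lean document; each statement's English description precedes it below -/
import Mathlib

section
/- Let A be a complex n×n matrix and h a complex m×n matrix. Then the following are equivalent: (i) for every x ∈ ℂⁿ, if h·Aᵏ·x = 0 for all natural numbers k < n, then x = 0; (ii) (Hautus test) for every λ ∈ ℂ and every v ∈ ℂⁿ with v ≠ 0 and A·v = λ·v, one has h·v ≠ 0. -/
open Matrix Polynomial

/-- If `h ∘ A^k` kills `x` for all `k < n`, then it kills it for all `k`,
by Cayley–Hamilton. -/
lemma key_all {n m : ℕ} (A : Matrix (Fin n) (Fin n) ℂ) (h : Matrix (Fin m) (Fin n) ℂ)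
    (x : Fin n → ℂ) (hx : ∀ k : ℕ, k < n → h.mulVec ((A ^ k).mulVec x) = 0) :
    ∀ k : ℕ, h.mulVec ((A ^ k).mulVec x) = 0 := by
  have hdeg : A.charpoly.natDegree = n := by
    simpa using A.charpoly_natDegree_eq_dim
  have hmonic : A.charpoly.Monic := A.charpoly_monic
  have haev : Polynomial.aeval A A.charpoly = 0 := A.aeval_self_charpoly
  have hsum : ∑ i ∈ Finset.range (n + 1), A.charpoly.coeff i • A ^ i = 0 := by
    have := Polynomial.aeval_eq_sum_range (R := ℂ) (p := A.charpoly) A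
    rw [haev, hdeg] at this
    exact this.symm
  have hcoef : A.charpoly.coeff n = 1 := by
    have := hmonic.leadingCoeff
    rwa [Polynomial.leadingCoeff, hdeg] at this
  have hAn : A ^ n = -∑ i ∈ Finset.range n, A.charpoly.coeff i • A ^ i := by
    rw [Finset.sum_range_succ, hcoef, one_smul] at hsum
    linear_combination (norm := ((try ring_nf); try module)) hsum
  intro k
  induction k using Nat.strong_induction_on with
  | _ k ih =>
    rcases Nat.eq_zero_or_pos n with h0 | hn
    · subst h0
      funext i
      simp [Matrix.mulVec, dotProduct]
    rcases lt_or_ge k n with hk | hk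
    · exact hx k hk
    · have hk' : k = (k - n) + n := by omega
      rw [hk', pow_add, hAn]
      have : A ^ (k - n) * -∑ i ∈ Finset.range n, A.charpoly.coeff i • A ^ i
          = -∑ i ∈ Finset.range n, A.charpoly.coeff i • A ^ (k - n + i) := by
        rw [Matrix.mul_neg, Finset.mul_sum]
        congr 1
        refine Finset.sum_congr rfl fun i _ => ?_
        rw [Matrix.mul_smul, ← pow_add]
      rw [this, Matrix.neg_mulVec]
      rw [show (∑ i ∈ Finset.range n, A.charpoly.coeff i • A ^ (k - n + i)) *ᵥ x
          = ∑ i ∈ Finset.range n, (A.charpoly.coeff i • A ^ (k - n + i)) *ᵥ x from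
        map_sum (Matrix.mulVec.addMonoidHomLeft x) _ _]
      rw [Matrix.mulVec_neg]
      rw [show (h *ᵥ ∑ i ∈ Finset.range n, (A.charpoly.coeff i • A ^ (k - n + i)) *ᵥ x)
          = ∑ i ∈ Finset.range n, h *ᵥ ((A.charpoly.coeff i • A ^ (k - n + i)) *ᵥ x) by
        simpa only [Matrix.mulVecLin_apply] using map_sum h.mulVecLin
          (fun i => (A.charpoly.coeff i • A ^ (k - n + i)) *ᵥ x) (Finset.range n)]
      have : ∀ i ∈ Finset.range n,
          h.mulVec ((A.charpoly.coeff i • A ^ (k - n + i)).mulVec x) = 0 := by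
        intro i hi
        rw [Matrix.smul_mulVec, Matrix.mulVec_smul]
        rw [ih (k - n + i) (by simp at hi; omega)]
        simp
      rw [Finset.sum_congr rfl this]
      simp

/-- The Kalman rank condition (trivial kernel of the stacked observability matrix) is
equivalent to the Hautus test: no eigenvector of `A` is annihilated by `h`. -/
theorem stmt_2 {n m : ℕ} (A : Matrix (Fin n) (Fin n) ℂ) (h : Matrix (Fin m) (Fin n) ℂ) :
    (∀ x : Fin n → ℂ, (∀ k : ℕ, k < n → h.mulVec ((A ^ k).mulVec x) = 0) → x = 0) ↔
      (∀ (lam : ℂ) (v : Fin n → ℂ), v ≠ 0 → A.mulVec v = lam • v → h.mulVec v ≠ 0) := by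
  constructor
  · intro hK lam v hv hev hhv
    apply hv
    apply hK
    intro k _
    have : (A ^ k).mulVec v = lam ^ k • v := by
      induction k with
      | zero => simp
      | succ k ih =>
        rw [pow_succ', pow_succ', ← Matrix.mulVec_mulVec, ih (by omega), Matrix.mulVec_smul, hev,
          smul_smul, mul_comm]
    rw [this, Matrix.mulVec_smul, hhv, smul_zero]
  · intro hH x hx
    by_contra hxne
    have key := key_all A h x hx
    -- the cyclic subspace
    set W : Submodule ℂ (Fin n → ℂ) :=
      Submodule.span ℂ (Set.range fun k : ℕ => (A ^ k).mulVec x) with hW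
    have hxW : x ∈ W := by
      apply Submodule.subset_span
      exact ⟨0, by simp⟩
    have hinv : ∀ y ∈ W, A.mulVecLin y ∈ W := by
      intro y hy
      have : W.map A.mulVecLin ≤ W := by
        rw [hW, Submodule.map_span]
        apply Submodule.span_le.mpr
        rintro _ ⟨_, ⟨k, rfl⟩, rfl⟩
        apply Submodule.subset_span
        exact ⟨k + 1, by simp [pow_succ', Matrix.mulVec_mulVec]⟩
      exact this (Submodule.mem_map_of_mem hy)
    have hker : ∀ y ∈ W, h.mulVec y = 0 := by
      intro y hy
      have : W ≤ LinearMap.ker h.mulVecLin := by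
        apply Submodule.span_le.mpr
        rintro _ ⟨k, rfl⟩
        simpa [LinearMap.mem_ker] using key k
      simpa using this hy
    haveI : Nontrivial W := nontrivial_of_ne ⟨x, hxW⟩ 0 (by
      intro hc
      exact hxne (by simpa using congrArg Subtype.val hc))
    set f : W →ₗ[ℂ] W := A.mulVecLin.restrict hinv with hf
    obtain ⟨μ, hμ⟩ := Module.End.exists_eigenvalue f
    obtain ⟨v, hv⟩ := hμ.exists_hasEigenvector
    have hvne : (v : Fin n → ℂ) ≠ 0 := by
      intro hc
      exact hv.2 (Subtype.ext hc)
    have hev : A.mulVec (v : Fin n → ℂ) = μ • (v : Fin n → ℂ) := by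
      have := hv.apply_eq_smul
      have := congrArg Subtype.val this
      simpa [hf, LinearMap.restrict_apply, Matrix.mulVecLin_apply] using this
    exact hH μ v hvne hev (hker v v.2)
end

section
/- Let N = q·r with integers q ≥ 2 and r ≥ 1. Let A be the two-dimensional discrete periodic Laplacian acting on functions u : (ℤ/Nℤ)×(ℤ/Nℤ) → ℂ by (Au)(i,j) = u(i+1,j) + u(i−1,j) + u(i,j+1) + u(i,j−1) − 4u(i,j), and let h be the block-averaging tokenizer with block side q. Then there exist λ ∈ ℂ and a nonzero v with A·v = λ·v and h·v = 0 (explicitly, v(i,j) = exp(2πi·r·i/N) with λ = 2·cos(2πr/N) − 2 works), and consequently h·exp(tA)·v = 0 for all t ∈ ℝ. Hence the constant-coefficient discretized heat equation on the periodic N×N lattice is not observable under block averaging: the distinct initial states v and 0 produce identical tokenized output trajectories for all times. -/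
open NormedSpace Matrix Complex

lemma aux_exp_eigen {n : Type*} [Fintype n] [DecidableEq n]
    (M : Matrix n n ℂ) (v : n → ℂ) (μ : ℂ) (hv : M.mulVec v = μ • v) :
    (NormedSpace.exp M).mulVec v = Complex.exp μ • v := by
  letI : NormedRing (Matrix n n ℂ) := Matrix.linftyOpNormedRing
  letI : NormedAlgebra ℂ (Matrix n n ℂ) := Matrix.linftyOpNormedAlgebra
  have hpow : ∀ k : ℕ, (M ^ k).mulVec v = μ ^ k • v := by
    intro k
    induction k with
    | zero => simp
    | succ k ih =>
        rw [pow_succ, ← Matrix.mulVec_mulVec, hv, Matrix.mulVec_smul, ih,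
          smul_smul, pow_succ, mul_comm]
  let L : Matrix n n ℂ →ₗ[ℂ] (n → ℂ) :=
    { toFun := fun B => B.mulVec v
      map_add' := fun B C => Matrix.add_mulVec B C v
      map_smul' := fun c B => by simp [Matrix.smul_mulVec] }
  let L' : Matrix n n ℂ →L[ℂ] (n → ℂ) := ⟨L, L.continuous_of_finiteDimensional⟩
  have hsum : Summable fun k : ℕ => (k.factorial : ℂ)⁻¹ • M ^ k :=
    NormedSpace.expSeries_summable' M
  have : (NormedSpace.exp M).mulVec v = L' (∑' k : ℕ, (k.factorial : ℂ)⁻¹ • M ^ k) := by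
    rw [NormedSpace.exp_eq_tsum (𝕂 := ℂ)]; rfl
  rw [this, L'.map_tsum hsum]
  have : ∀ k : ℕ, L' ((k.factorial : ℂ)⁻¹ • M ^ k) = ((k.factorial : ℂ)⁻¹ * μ ^ k) • v := by
    intro k
    show (((k.factorial : ℂ)⁻¹ • M ^ k)).mulVec v = _
    rw [Matrix.smul_mulVec, hpow, smul_smul]
  simp_rw [this]
  rw [Summable.tsum_smul_const]
  · congr 1
    rw [Complex.exp_eq_exp_ℂ, NormedSpace.exp_eq_tsum (𝕂 := ℂ)]
    simp [smul_eq_mul]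
  · simpa [smul_eq_mul] using NormedSpace.expSeries_summable' (𝕂 := ℂ) μ

set_option maxHeartbeats 1000000 in
/-- The constant-coefficient discretized heat equation on the periodic `N × N` lattice,
`N = q·r`, is not observable under block averaging with block side `q`: there is an
eigenvector of the discrete Laplacian (explicitly the Fourier mode
`v (i,j) = exp(2πi r i / N)` with eigenvalue `2 cos(2πr/N) − 2`) annihilated by the
tokenizer, whence its tokenized output trajectory `t ↦ h·exp(tA)·v` vanishes identically. -/
theorem stmt_7 (q r N : ℕ) (hq : 2 ≤ q) (hr : 1 ≤ r) (hN : N = q * r)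
    [NeZero N] [NeZero r]
    (A : Matrix (ZMod N × ZMod N) (ZMod N × ZMod N) ℂ)
    (hA : ∀ (u : ZMod N × ZMod N → ℂ) (p : ZMod N × ZMod N),
      A.mulVec u p = u (p.1 + 1, p.2) + u (p.1 - 1, p.2) + u (p.1, p.2 + 1)
        + u (p.1, p.2 - 1) - 4 * u p)
    (h : Matrix (ZMod r × ZMod r) (ZMod N × ZMod N) ℂ)
    (hh : ∀ (u : ZMod N × ZMod N → ℂ) (ab : ZMod r × ZMod r),
      h.mulVec u ab = (1 / (q : ℂ) ^ 2) *
        ∑ s ∈ Finset.range q, ∑ s' ∈ Finset.range q,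
          u (((ab.1.val * q + s : ℕ) : ZMod N), ((ab.2.val * q + s' : ℕ) : ZMod N))) :
    ∃ (lam : ℂ) (v : ZMod N × ZMod N → ℂ),
      lam = ((2 * Real.cos (2 * Real.pi * r / N) - 2 : ℝ) : ℂ) ∧
      (v = fun p => Complex.exp (2 * Real.pi * Complex.I * r * p.1.val / N)) ∧
      v ≠ 0 ∧ A.mulVec v = lam • v ∧ h.mulVec v = 0 ∧
      ∀ t : ℝ, h.mulVec ((NormedSpace.exp ((t : ℂ) • A)).mulVec v) = 0 := by
  haveI : Fact (1 < N) := ⟨by nlinarith⟩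
  set θ : ℝ := 2 * Real.pi * r / N with hθ
  set lam : ℂ := ((2 * Real.cos θ - 2 : ℝ) : ℂ) with hlam
  set w : ℂ := Complex.exp ((θ : ℂ) * Complex.I) with hw
  set v : ZMod N × ZMod N → ℂ :=
    fun p => Complex.exp (2 * Real.pi * Complex.I * r * p.1.val / N) with hv
  have hNne : (N : ℂ) ≠ 0 := Nat.cast_ne_zero.mpr (NeZero.ne N)
  have hNRne : (N : ℝ) ≠ 0 := Nat.cast_ne_zero.mpr (NeZero.ne N)
  have hNc : (N : ℂ) = (q : ℂ) * (r : ℂ) := by rw [hN]; push_cast; ring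
  have hθc : (θ : ℂ) = 2 * Real.pi * r / N := by rw [hθ]; push_cast; ring
  -- v in terms of w
  have hvw : ∀ p : ZMod N × ZMod N, v p = w ^ (p.1.val) := by
    intro p
    simp only [hv, hw, ← Complex.exp_nat_mul, hθc]
    congr 1
    ring
  -- w^N = 1
  have hwN : w ^ N = 1 := by
    rw [hw, ← Complex.exp_nat_mul, hθc]
    have : (N : ℂ) * (2 * Real.pi * r / N * Complex.I) = (r : ℂ) * (2 * Real.pi * Complex.I) := by
      field_simp
    rw [this]
    exact_mod_cast Complex.exp_nat_mul_two_pi_mul_I r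
  -- w^q = 1
  have hwq : w ^ q = 1 := by
    rw [hw, ← Complex.exp_nat_mul, hθc]
    have : (q : ℂ) * (2 * Real.pi * r / N * Complex.I) = 2 * Real.pi * Complex.I := by
      rw [hNc]
      have hrne : (r : ℂ) ≠ 0 := Nat.cast_ne_zero.mpr (NeZero.ne r)
      have hqne : (q : ℂ) ≠ 0 := by
        have : q ≠ 0 := by omega
        exact_mod_cast Nat.cast_ne_zero.mpr this
      field_simp
    rw [this]
    exact Complex.exp_two_pi_mul_I
  -- w ≠ 1
  have hw1 : w ≠ 1 := by
    intro heq
    rw [hw, Complex.exp_eq_one_iff] at heq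
    obtain ⟨n, hn⟩ := heq
    have hI : (θ : ℂ) = (n : ℂ) * (2 * Real.pi) := by
      apply mul_right_cancel₀ Complex.I_ne_zero
      rw [hn]; ring
    have hR : θ = (n : ℝ) * (2 * Real.pi) := by exact_mod_cast hI
    have hpi : (0 : ℝ) < Real.pi := Real.pi_pos
    have hrN : (r : ℝ) < (N : ℝ) := by
      have : r < N := by nlinarith
      exact_mod_cast this
    have hrpos : (0 : ℝ) < (r : ℝ) := by exact_mod_cast hr
    have hNpos : (0 : ℝ) < (N : ℝ) := lt_trans hrpos hrN
    have hdiv : (n : ℝ) = (r : ℝ) / N := by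
      rw [hθ] at hR
      field_simp at hR ⊢
      nlinarith [hR]
    have h0 : (0 : ℝ) < (n : ℝ) := by rw [hdiv]; positivity
    have h1 : (n : ℝ) < 1 := by rw [hdiv]; exact (div_lt_one hNpos).mpr hrN
    have : (0 : ℤ) < n := by exact_mod_cast h0
    have : n < 1 := by exact_mod_cast h1
    omega
  have hwne : w ≠ 0 := Complex.exp_ne_zero _
  -- w^(k % N) = w^k
  have hmod : ∀ k : ℕ, w ^ (k % N) = w ^ k := fun k => (pow_eq_pow_mod k hwN).symm
  have hval : ∀ (m : ℕ) (y : ZMod N), v (((m : ℕ) : ZMod N), y) = w ^ m := by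
    intro m y
    rw [hvw]
    show w ^ ((m : ZMod N).val) = w ^ m
    rw [ZMod.val_natCast, hmod]
  -- eigenvector property
  have heig : A.mulVec v = lam • v := by
    funext p
    rw [hA v p]
    have key : ∀ x : ZMod N, w ^ ((x + 1).val) = w * w ^ x.val := by
      intro x
      rw [ZMod.val_add, hmod, ZMod.val_one, pow_add, pow_one, mul_comm]
    have h1 : v (p.1 + 1, p.2) = w * v p := by
      rw [hvw, hvw]; exact key p.1
    have h2 : v (p.1 - 1, p.2) = w⁻¹ * v p := by
      rw [hvw, hvw]
      have hk := key (p.1 - 1)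
      rw [sub_add_cancel] at hk
      show w ^ ((p.1 - 1).val) = w⁻¹ * w ^ (p.1.val)
      rw [hk, inv_mul_cancel_left₀ hwne]
    have h3 : v (p.1, p.2 + 1) = v p := (hvw _).trans (hvw p).symm
    have h4 : v (p.1, p.2 - 1) = v p := (hvw _).trans (hvw p).symm
    rw [h1, h2, h3, h4]
    have hcos : (lam : ℂ) = w + w⁻¹ - 2 := by
      rw [hlam, hw, ← Complex.exp_neg]
      push_cast
      have h2c := Complex.two_cos (θ : ℂ)
      rw [neg_mul] at h2c; push_cast at h2c
      linear_combination h2c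
    show _ = lam * v p
    rw [hcos]
    ring
  -- tokenizer annihilates v
  have hgeom : ∑ s ∈ Finset.range q, w ^ s = 0 := by
    rw [geom_sum_eq hw1, hwq]
    simp
  have hhv : h.mulVec v = 0 := by
    funext ab
    rw [show (0 : ZMod r × ZMod r → ℂ) ab = 0 from rfl, hh v ab]
    have hterm : ∀ s s' : ℕ,
        v (((ab.1.val * q + s : ℕ) : ZMod N), ((ab.2.val * q + s' : ℕ) : ZMod N))
          = w ^ (ab.1.val * q) * w ^ s := by
      intro s s'
      rw [hval, pow_add]
    simp only [hterm, Finset.sum_const, Finset.card_range, nsmul_eq_mul, ← Finset.mul_sum, hgeom]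
    simp
  refine ⟨lam, v, rfl, rfl, ?_, heig, hhv, ?_⟩
  · intro h0
    have := congrFun h0 ((0 : ZMod N), (0 : ZMod N))
    rw [hvw] at this
    simp [ZMod.val_zero] at this
  · intro t
    have hA' : ((t : ℂ) • A).mulVec v = ((t : ℂ) * lam) • v := by
      rw [Matrix.smul_mulVec, heig, smul_smul]
    rw [aux_exp_eigen _ _ _ hA', Matrix.mulVec_smul, hhv, smul_zero]
end

section
/- Let A be a complex n×n matrix and h a complex m×n matrix, and suppose there exist μ ∈ ℂ and a nonzero v ∈ ℂⁿ with A·v = μ·v and h·v = 0. Let λ ∈ ℂ satisfy λ² = μ, and define the 2n×2n block matrix A_w = [[0, I],[A, 0]] and the m×2n block matrix h_w = [h, 0]. Then the nonzero vector w = (v, λ·v) ∈ ℂ^{2n} satisfies A_w·w = λ·w and h_w·w = 0; consequently h_w·exp(t·A_w)·w = 0 for all t ∈ ℝ, so the first-order system for the constant-coefficient lattice wave equation, observed through the tokenizer on the amplitude component only, is not observable. -/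
set_option maxHeartbeats 1000000

open NormedSpace Matrix

lemma exp_mulVec_eigen {N : Type*} [Fintype N] [DecidableEq N]
    (B : Matrix N N ℂ) (c : ℂ) (w : N → ℂ) (hB : B.mulVec w = c • w) :
    (NormedSpace.exp B).mulVec w = NormedSpace.exp c • w := by
  letI : SeminormedRing (Matrix N N ℂ) := Matrix.linftyOpSemiNormedRing
  letI : NormedRing (Matrix N N ℂ) := Matrix.linftyOpNormedRing
  letI : NormedAlgebra ℂ (Matrix N N ℂ) := Matrix.linftyOpNormedAlgebra
  have hBk : ∀ k : ℕ, (B ^ k).mulVec w = c ^ k • w := by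
    intro k
    induction k with
    | zero => simp
    | succ k ih =>
        rw [pow_succ, ← Matrix.mulVec_mulVec, hB, Matrix.mulVec_smul, ih,
          smul_smul, pow_succ, mul_comm]
  let f : Matrix N N ℂ →ₗ[ℂ] (N → ℂ) :=
    { toFun := fun M => M.mulVec w
      map_add' := fun M₁ M₂ => Matrix.add_mulVec M₁ M₂ w
      map_smul' := fun r M => Matrix.smul_mulVec r M w }
  have hf : Continuous f := LinearMap.continuous_of_finiteDimensional f
  let F : Matrix N N ℂ →L[ℂ] (N → ℂ) := ⟨f, hf⟩
  have hsum : Summable fun k : ℕ => ((Nat.factorial k : ℂ))⁻¹ • B ^ k := expSeries_summable' B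
  have h1 : (NormedSpace.exp B).mulVec w = ∑' k : ℕ, (((Nat.factorial k : ℂ))⁻¹ • B ^ k).mulVec w := by
    have := F.map_tsum hsum
    rw [exp_eq_tsum (𝕂 := ℂ)]
    exact this
  rw [h1]
  have h2 : ∀ k : ℕ, (((Nat.factorial k : ℂ))⁻¹ • B ^ k).mulVec w = (((Nat.factorial k : ℂ))⁻¹ * c ^ k) • w := by
    intro k
    rw [Matrix.smul_mulVec, hBk, smul_smul]
  rw [tsum_congr h2]
  have hsum2 : Summable fun k : ℕ => ((Nat.factorial k : ℂ))⁻¹ * c ^ k := by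
    simpa [smul_eq_mul] using expSeries_summable' (𝕂 := ℂ) c
  rw [Summable.tsum_smul_const hsum2, exp_eq_tsum (𝕂 := ℂ)]
  congr 1


/-- If `(A, h)` has an eigenvector `v` (eigenvalue `μ`) annihilated by `h`, and `λ² = μ`,
then `w = (v, λv)` is a nonzero eigenvector of the first-order wave operator
`A_w = [[0, I], [A, 0]]` annihilated by the amplitude-only tokenizer `h_w = [h, 0]`;
consequently the tokenized output trajectory of `w` vanishes identically, so the
first-order lattice wave system is not observable. -/
theorem stmt_8 {n m : ℕ} (A : Matrix (Fin n) (Fin n) ℂ) (h : Matrix (Fin m) (Fin n) ℂ)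
    (mu lam : ℂ) (v : Fin n → ℂ) (hv : v ≠ 0) (hAv : A.mulVec v = mu • v)
    (hhv : h.mulVec v = 0) (hlam : lam ^ 2 = mu)
    (Aw : Matrix (Fin n ⊕ Fin n) (Fin n ⊕ Fin n) ℂ)
    (hAw : Aw = Matrix.fromBlocks 0 1 A 0)
    (hw : Matrix (Fin m) (Fin n ⊕ Fin n) ℂ)
    (hhw : hw = Matrix.of fun i j => Sum.elim (fun j₁ => h i j₁) (fun _ => 0) j)
    (w : Fin n ⊕ Fin n → ℂ) (hwdef : w = Sum.elim v (lam • v)) :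
    w ≠ 0 ∧ Aw.mulVec w = lam • w ∧ hw.mulVec w = 0 ∧
      ∀ t : ℝ, hw.mulVec ((NormedSpace.exp ((t : ℂ) • Aw)).mulVec w) = 0 := by
  have hwne : w ≠ 0 := by
    obtain ⟨i, hi⟩ := Function.ne_iff.mp hv
    subst hwdef
    intro hcon
    exact hi (by simpa using congrFun hcon (Sum.inl i))
  have hAww : Aw.mulVec w = lam • w := by
    subst hAw hwdef
    rw [Matrix.fromBlocks_mulVec]
    funext j
    cases j with
    | inl i => simp
    | inr i =>
        simp only [Sum.elim_comp_inl, Matrix.zero_mulVec, add_zero, hAv, Sum.elim_inr,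
          Pi.smul_apply, ← hlam, pow_two, smul_smul, smul_eq_mul, mul_assoc]
  have hhww : hw.mulVec w = 0 := by
    subst hhw hwdef
    funext i
    have := congrFun hhv i
    simpa [Matrix.mulVec, dotProduct, Fintype.sum_sum_type] using this
  refine ⟨hwne, hAww, hhww, fun t => ?_⟩
  have hB : ((t : ℂ) • Aw).mulVec w = ((t : ℂ) * lam) • w := by
    rw [Matrix.smul_mulVec, hAww, smul_smul]
  rw [exp_mulVec_eigen _ _ _ hB, Matrix.mulVec_smul, hhww, smul_zero]
end

section
/- Let A be a real n×n matrix, h a real m×n matrix, and T > 0. Define the observability Gramian Q(T) = ∫₀ᵀ exp(sAᵀ)·hᵀ·h·exp(sA) ds (a Bochner integral of matrix-valued functions). Then for every x ∈ ℝⁿ, xᵀ·Q(T)·x = ∫₀ᵀ ‖h·exp(sA)·x‖² ds, and Q(T) is positive definite if and only if for every nonzero x ∈ ℝⁿ there exists s ∈ [0, T] with h·exp(sA)·x ≠ 0. -/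
open NormedSpace Matrix MeasureTheory

lemma key_quad {n m : ℕ} (B : Matrix (Fin n) (Fin n) ℝ) (h : Matrix (Fin m) (Fin n) ℝ)
    (x : Fin n → ℝ) :
    x ⬝ᵥ (Bᵀ * hᵀ * h * B).mulVec x =
      (h.mulVec (B.mulVec x)) ⬝ᵥ (h.mulVec (B.mulVec x)) := by
  rw [← Matrix.mulVec_mulVec, ← Matrix.mulVec_mulVec, ← Matrix.mulVec_mulVec,
    dotProduct_mulVec, Matrix.vecMul_transpose,
    dotProduct_mulVec, Matrix.vecMul_transpose]

lemma quad_expand {n : ℕ} (N : Matrix (Fin n) (Fin n) ℝ) (x : Fin n → ℝ) :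
    x ⬝ᵥ N.mulVec x = ∑ i, ∑ j, x i * N i j * x j := by
  simp [dotProduct, Matrix.mulVec, Finset.mul_sum, mul_assoc]

lemma gram_quad {n m : ℕ} (E : ℝ → Matrix (Fin n) (Fin n) ℝ)
    (h : Matrix (Fin m) (Fin n) ℝ) (T : ℝ)
    (hE : ∀ i j, Continuous fun s => E s i j) (x : Fin n → ℝ) :
    x ⬝ᵥ (Matrix.of fun i j =>
        ∫ s in (0:ℝ)..T, ((E s)ᵀ * hᵀ * h * E s) i j).mulVec x =
      ∫ s in (0:ℝ)..T, (h.mulVec ((E s).mulVec x)) ⬝ᵥ (h.mulVec ((E s).mulVec x)) := by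
  obtain ⟨M, hM⟩ : ∃ M : ℝ → Matrix (Fin n) (Fin n) ℝ,
      ∀ s, M s = (E s)ᵀ * hᵀ * h * E s := ⟨_, fun _ => rfl⟩
  simp only [← hM]
  have hMc : ∀ i j, Continuous fun s => M s i j := by
    intro i j
    simp only [hM, Matrix.mul_apply, Matrix.transpose_apply]
    refine continuous_finset_sum _ fun k _ => ?_
    refine Continuous.mul ?_ (hE k j)
    refine continuous_finset_sum _ fun l _ => ?_
    exact Continuous.mul (continuous_finset_sum _ fun p _ =>
      ((hE p i).mul continuous_const)) continuous_const
  have hMint : ∀ i j, IntervalIntegrable (fun s => M s i j) volume 0 T :=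
    fun i j => (hMc i j).intervalIntegrable 0 T
  rw [quad_expand]
  simp only [Matrix.of_apply]
  have e2 : ∀ i j, (∫ s in (0:ℝ)..T, x i * M s i j * x j)
      = x i * (∫ s in (0:ℝ)..T, M s i j) * x j := by
    intro i j
    rw [intervalIntegral.integral_mul_const, intervalIntegral.integral_const_mul]
  have hInt2 : ∀ i : Fin n,
      IntervalIntegrable (fun s => ∑ j, x i * M s i j * x j) volume 0 T := by
    intro i
    exact (continuous_finset_sum _ fun j _ =>
      (continuous_const.mul (hMc i j)).mul continuous_const).intervalIntegrable 0 T
  have step1 : (∫ s in (0:ℝ)..T, ∑ i, ∑ j, x i * M s i j * x j)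
      = ∑ i, ∫ s in (0:ℝ)..T, ∑ j, x i * M s i j * x j :=
    intervalIntegral.integral_finset_sum (fun i _ => hInt2 i)
  have step2 : ∀ i : Fin n, (∫ s in (0:ℝ)..T, ∑ j, x i * M s i j * x j)
      = ∑ j, ∫ s in (0:ℝ)..T, x i * M s i j * x j :=
    fun i => intervalIntegral.integral_finset_sum
      (fun j _ => ((hMint i j).const_mul _).mul_const _)
  have e3 : ∑ i, ∑ j, x i * (∫ s in (0:ℝ)..T, M s i j) * x j
      = ∫ s in (0:ℝ)..T, ∑ i, ∑ j, x i * M s i j * x j := by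
    simp only [← e2]
    exact (step1.trans (Finset.sum_congr rfl fun i _ => step2 i)).symm
  rw [e3]
  refine intervalIntegral.integral_congr fun s _ => ?_
  rw [← key_quad (E s) h x, ← hM s, quad_expand]
lemma cont_exp_entry {n : ℕ} (A : Matrix (Fin n) (Fin n) ℝ) (i j : Fin n) :
    Continuous fun s : ℝ => (NormedSpace.exp (s • A)) i j := by
  letI : NormedRing (Matrix (Fin n) (Fin n) ℝ) := Matrix.linftyOpNormedRing
  letI : NormedAlgebra ℝ (Matrix (Fin n) (Fin n) ℝ) := Matrix.linftyOpNormedAlgebra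
  letI : NormedAlgebra ℚ (Matrix (Fin n) (Fin n) ℝ) :=
    { norm_smul_le := fun q M => by
        rw [← Rat.cast_smul_eq_qsmul ℝ q M, ← Rat.norm_cast_real q]
        exact norm_smul_le _ _ }
  have h1 : Continuous fun s : ℝ => NormedSpace.exp (s • A) :=
    exp_continuous.comp (continuous_id.smul continuous_const)
  exact ((continuous_apply j).comp (continuous_apply i)).comp h1

lemma gram_herm {n m : ℕ} (E : ℝ → Matrix (Fin n) (Fin n) ℝ)
    (h : Matrix (Fin m) (Fin n) ℝ) (T : ℝ) :
    (Matrix.of fun i j =>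
        ∫ s in (0:ℝ)..T, ((E s)ᵀ * hᵀ * h * E s) i j : Matrix (Fin n) (Fin n) ℝ).IsHermitian := by
  obtain ⟨M, hM⟩ : ∃ M : ℝ → Matrix (Fin n) (Fin n) ℝ,
      ∀ s, M s = (E s)ᵀ * hᵀ * h * E s := ⟨_, fun _ => rfl⟩
  simp only [← hM]
  have hsym : ∀ s, (M s)ᵀ = M s := by
    intro s
    rw [hM]
    simp only [Matrix.transpose_mul, Matrix.transpose_transpose]
    rw [← Matrix.mul_assoc, ← Matrix.mul_assoc]
  rw [Matrix.IsHermitian]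
  ext i j
  simp only [Matrix.conjTranspose_apply, Matrix.of_apply, star_trivial]
  congr 1
  ext s
  calc M s j i = (M s)ᵀ i j := rfl
  _ = M s i j := by rw [hsym s]

lemma obs_cont {n m : ℕ} (E : ℝ → Matrix (Fin n) (Fin n) ℝ)
    (h : Matrix (Fin m) (Fin n) ℝ) (hE : ∀ i j, Continuous fun s => E s i j)
    (x : Fin n → ℝ) :
    Continuous fun s => (h.mulVec ((E s).mulVec x)) ⬝ᵥ (h.mulVec ((E s).mulVec x)) := by
  have hfc : ∀ k, Continuous fun s => h.mulVec ((E s).mulVec x) k := by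
    intro k
    simp only [Matrix.mulVec, dotProduct]
    refine continuous_finset_sum _ fun l _ => Continuous.mul continuous_const ?_
    exact continuous_finset_sum _ fun p _ => (hE l p).mul continuous_const
  simp only [dotProduct]
  exact continuous_finset_sum _ fun k _ => (hfc k).mul (hfc k)

/-- The observability Gramian `Q(T) = ∫₀ᵀ exp(sAᵀ)·hᵀ·h·exp(sA) ds` satisfies
`xᵀ Q(T) x = ∫₀ᵀ ‖h exp(sA) x‖² ds` (Euclidean squared norm written as a dot product),
and `Q(T)` is positive definite iff every nonzero initial state produces a not-identically-zero
output on `[0, T]`. -/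
theorem stmt_12 {n m : ℕ} (A : Matrix (Fin n) (Fin n) ℝ) (h : Matrix (Fin m) (Fin n) ℝ)
    (T : ℝ) (hT : 0 < T) (Q : Matrix (Fin n) (Fin n) ℝ)
    (hQ : Q = Matrix.of fun i j =>
      ∫ s in (0:ℝ)..T, ((NormedSpace.exp (s • A))ᵀ * hᵀ * h * NormedSpace.exp (s • A)) i j) :
    (∀ x : Fin n → ℝ,
      x ⬝ᵥ Q.mulVec x =
        ∫ s in (0:ℝ)..T,
          (h.mulVec ((NormedSpace.exp (s • A)).mulVec x)) ⬝ᵥ (h.mulVec ((NormedSpace.exp (s • A)).mulVec x))) ∧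
    (Q.PosDef ↔
      ∀ x : Fin n → ℝ, x ≠ 0 →
        ∃ s ∈ Set.Icc (0:ℝ) T, h.mulVec ((NormedSpace.exp (s • A)).mulVec x) ≠ 0) := by
  obtain ⟨E, hE, hEc⟩ : ∃ E : ℝ → Matrix (Fin n) (Fin n) ℝ,
      (∀ s, E s = NormedSpace.exp (s • A)) ∧ (∀ i j, Continuous fun s => E s i j) :=
    ⟨_, fun _ => rfl, cont_exp_entry A⟩
  simp only [← hE] at hQ ⊢
  subst hQ
  have part1 := gram_quad E h T hEc
  refine ⟨part1, ?_⟩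
  have hgc := obs_cont E h hEc
  have hgnonneg : ∀ (x : Fin n → ℝ) s,
      0 ≤ (h.mulVec ((E s).mulVec x)) ⬝ᵥ (h.mulVec ((E s).mulVec x)) := by
    intro x s
    simpa [dotProduct] using
      Finset.sum_nonneg fun k _ => mul_self_nonneg (h.mulVec ((E s).mulVec x) k)
  constructor
  · rintro hQd x hx
    obtain ⟨-, hpos⟩ := Matrix.posDef_iff_dotProduct_mulVec.mp hQd
    by_contra hcon
    push_neg at hcon
    have h0 : (∫ s in (0:ℝ)..T,
        (h.mulVec ((E s).mulVec x)) ⬝ᵥ (h.mulVec ((E s).mulVec x))) = 0 := by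
      have hcg : (∫ s in (0:ℝ)..T,
          (h.mulVec ((E s).mulVec x)) ⬝ᵥ (h.mulVec ((E s).mulVec x)))
          = ∫ s in (0:ℝ)..T, (0:ℝ) :=
        intervalIntegral.integral_congr (fun s hs => by
          rw [Set.uIcc_of_le hT.le] at hs
          simp [hcon s hs])
      rw [hcg, intervalIntegral.integral_zero]
    have hlt := hpos (x := x) hx
    rw [star_trivial, part1 x, h0] at hlt
    exact lt_irrefl 0 hlt
  · intro hobs
    refine Matrix.posDef_iff_dotProduct_mulVec.mpr ⟨gram_herm E h T, fun x hx => ?_⟩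
    rw [star_trivial, part1 x]
    obtain ⟨s₀, hs₀, hfs₀⟩ := hobs x hx
    refine intervalIntegral.integral_pos hT ((hgc x).continuousOn)
      (fun s _ => hgnonneg x s) ⟨s₀, hs₀, ?_⟩
    have hne : (h.mulVec ((E s₀).mulVec x)) ⬝ᵥ (h.mulVec ((E s₀).mulVec x)) ≠ 0 :=
      fun hc => hfs₀ (dotProduct_self_eq_zero.mp hc)
    exact lt_of_le_of_ne (hgnonneg x s₀) (Ne.symm hne)
end
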